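/- Let X be a finite set, p ≥ 1, S* a finite index set partitioned into S*_1 and S*_2, and for each i let F_i' be a set with |F_i'| = |S*|. Fix elements a_j^{(i)} ∈ X for j in an ambient index set. Let A and r be Z_{≥0}-valued measures on X^p with total masses |S*| and |S*_1| respectively and r ≤ A pointwise. Define Ψ_p(A, r, a) as the set of p-tuples of bijections σ_i : S* → F_i' such that A = Σ_{j∈S*} δ_{(a^{(1)}_{σ_1(j)},...,a^{(p)}_{σ_p(j)})} and r = Σ_{j∈S*_1} δ_{(a^{(1)}_{σ_1(j)},...,a^{(p)}_{σ_p(j)})}. If Ψ_p(A, r, a) is nonempty, then |Ψ_p(A, r, a)| = |S*_1|! · |S*_2|! · (∏_{i=1}^p ∏_{x∈X} A_i(x)!) / (∏_{x∈X^p} A(x)!) · ∏_{x∈X^p} C(A(x), r(x)), where A_i is the i-th marginal of A. -/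

import Mathlib

/-- Equivalences compatible with colorings correspond to families of fiber equivalences. -/
def colorEquiv {α β Y : Type*} (f : α → Y) (g : β → Y) :
    {e : α ≃ β // ∀ x, g (e x) = f x} ≃ ∀ y, {x // f x = y} ≃ {b // g b = y} where
  toFun e y := Equiv.subtypeEquiv e.1 (fun x => by
    constructor
    · rintro rfl; exact e.2 x
    · intro h; rw [← e.2 x, h])
  invFun E := ⟨⟨fun x => (E (f x) ⟨x, rfl⟩).1, fun b => ((E (g b)).symm ⟨b, rfl⟩).1,
      fun x => by
        have key : ∀ (y : Y) (s : {b // g b = y}),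
            (((E (g s.1)).symm ⟨s.1, rfl⟩).1 : α) = ((E y).symm s).1 := by
          rintro y ⟨b, rfl⟩; rfl
        beta_reduce
        rw [key (f x) (E (f x) ⟨x, rfl⟩), Equiv.symm_apply_apply],
      fun b => by
        have key : ∀ (y : Y) (s : {x // f x = y}),
            (((E (f s.1)) ⟨s.1, rfl⟩).1 : β) = ((E y) s).1 := by
          rintro y ⟨x, rfl⟩; rfl
        beta_reduce
        rw [key (g b) ((E (g b)).symm ⟨b, rfl⟩), Equiv.apply_symm_apply]⟩,
    fun x => (E (f x) ⟨x, rfl⟩).2⟩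
  left_inv e := Subtype.ext (Equiv.ext fun x => rfl)
  right_inv E := by
    funext y; apply Equiv.ext; rintro ⟨x, rfl⟩; apply Subtype.ext; rfl

theorem nat_card_color {α β Y : Type*} [Finite α] [Finite β] [Fintype Y] (f : α → Y) (g : β → Y) :
    Nat.card {e : α ≃ β // ∀ x, g (e x) = f x} =
      ∏ y : Y, Nat.card ({x // f x = y} ≃ {b // g b = y}) := by
  classical
  rw [Nat.card_congr (colorEquiv f g), Nat.card_pi]

theorem nat_card_equiv_of_card_eq {A B : Type*} [Finite A] [Finite B]
    (h : Nat.card A = Nat.card B) : Nat.card (A ≃ B) = (Nat.card A).factorial := by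
  classical
  have := Fintype.ofFinite A
  have := Fintype.ofFinite B
  simp only [Nat.card_eq_fintype_card] at h ⊢
  exact Fintype.card_equiv (Fintype.equivOfCardEq h)

theorem nat_card_subtype {α : Type*} [Fintype α] (q : α → Prop) [DecidablePred q] :
    Nat.card {x // q x} = (Finset.univ.filter q).card := by
  simp [Nat.card_eq_fintype_card, Fintype.card_subtype]



section Master
variable {X : Type*} {p : ℕ} {Sstar : Type*} [DecidableEq Sstar]
  {F : Fin p → Type*}

/-- Combined coloring recording the produced point of `X^p` and membership in `S₁`. -/
def Gmap (S₁ : Finset Sstar) (a : ∀ i : Fin p, F i → X)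
    (σ : ∀ i, Sstar ≃ F i) (j : Sstar) : (Fin p → X) × Bool :=
  (fun i => a i (σ i j), decide (j ∈ S₁))

private lemma sigma_ext_helper {ι κ : Type*} {q : ι → κ → Prop} {s t : ι} (h : s = t)
    {u : {k // q s k}} {v : {k // q t k}} (h2 : u.1 = v.1) :
    (⟨s, u⟩ : Σ i, {k // q i k}) = ⟨t, v⟩ := by
  subst h; exact congrArg _ (Subtype.ext h2)

/-- The master bijection underlying the orbit–stabilizer count. -/
def masterEquiv (S₁ : Finset Sstar) (a : ∀ i : Fin p, F i → X)
    (σ0 : ∀ i, Sstar ≃ F i) (SS : Set (∀ i, Sstar ≃ F i))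
    (hclosed : ∀ (π : ∀ i, {π : F i ≃ F i // ∀ z, a i (π z) = a i z})
      (τ : Sstar ≃ Sstar), (∀ j, decide (τ j ∈ S₁) = decide (j ∈ S₁)) →
      (fun i => τ.trans ((σ0 i).trans (π i).1)) ∈ SS) :
    (Σ σp : SS, {τ : Sstar ≃ Sstar // ∀ j, Gmap S₁ a σ0 (τ j) = Gmap S₁ a σp.1 j}) ≃
      ((∀ i, {π : F i ≃ F i // ∀ z, a i (π z) = a i z}) ×
        {τ : Sstar ≃ Sstar // ∀ j, decide (τ j ∈ S₁) = decide (j ∈ S₁)}) where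
  toFun s :=
    (fun i => ⟨(σ0 i).symm.trans (s.2.1.symm.trans (s.1.1 i)), fun z => by
        have h := congrArg (fun q => q.1 i) (s.2.2 (s.2.1.symm ((σ0 i).symm z)))
        simpa [Gmap] using h.symm⟩,
      ⟨s.2.1, fun j => congrArg Prod.snd (s.2.2 j)⟩)
  invFun w :=
    ⟨⟨fun i => w.2.1.trans ((σ0 i).trans (w.1 i).1), hclosed w.1 w.2.1 w.2.2⟩,
      ⟨w.2.1, fun j => by
        refine Prod.ext (funext fun i => ?_) (w.2.2 j)
        simpa [Gmap] using ((w.1 i).2 (σ0 i (w.2.1 j))).symm⟩⟩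
  left_inv s := by
    obtain ⟨⟨σ, hσ⟩, ⟨τ, hτ⟩⟩ := s
    have h1 : (fun i => τ.trans ((σ0 i).trans ((σ0 i).symm.trans (τ.symm.trans (σ i))))) = σ :=
      funext fun i => Equiv.ext fun j => by simp
    exact sigma_ext_helper (q := fun (σp : SS) (τ' : Sstar ≃ Sstar) =>
        ∀ j, Gmap S₁ a σ0 (τ' j) = Gmap S₁ a σp.1 j)
      (Subtype.ext h1) rfl
  right_inv w := by
    obtain ⟨π, ⟨τ, hτ⟩⟩ := w
    refine Prod.ext (funext fun i => Subtype.ext (Equiv.ext fun z => by simp))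
      (Subtype.ext rfl)

end Master

private lemma nat_card_sigma' {ι : Type*} [Fintype ι] (T : ι → Type*) [∀ i, Finite (T i)] :
    Nat.card (Σ i, T i) = ∑ i, Nat.card (T i) := by
  classical
  letI : ∀ i, Fintype (T i) := fun i => Fintype.ofFinite (T i)
  simp [Nat.card_eq_fintype_card]

private lemma filter_card_comp_equiv {γ : Type*} [Fintype γ] [DecidableEq γ]
    (s : Finset γ) (q : γ → Prop) [DecidablePred q] (τ : γ ≃ γ)
    (hs : ∀ j, τ j ∈ s ↔ j ∈ s) :
    (s.filter q).card = (s.filter fun j => q (τ j)).card := by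
  refine Finset.card_bij' (fun j _ => τ.symm j) (fun j _ => τ j) ?_ ?_ ?_ ?_
  · intro j hj
    simp only [Finset.mem_filter] at hj ⊢
    have h2 := hs (τ.symm j)
    simp only [Equiv.apply_symm_apply] at h2
    exact ⟨h2.mp hj.1, by simpa using hj.2⟩
  · intro j hj
    simp only [Finset.mem_filter] at hj ⊢
    exact ⟨(hs j).mpr hj.1, hj.2⟩
  · intro j hj; simp
  · intro j hj; simp



/-- Counting lemma for tuples of bijections reproducing prescribed measures `A` and `r`
(the core combinatorial ingredient of the exponential approximation). -/
theorem count_bijection_tuples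
    {X : Type*} [Fintype X] [DecidableEq X]
    (p : ℕ) (hp : 1 ≤ p)
    (Sstar : Type*) [Fintype Sstar] [DecidableEq Sstar]
    (S₁ : Finset Sstar)
    (F : Fin p → Type*) [∀ i, Fintype (F i)] [∀ i, DecidableEq (F i)]
    (hcard : ∀ i, Fintype.card (F i) = Fintype.card Sstar)
    (a : ∀ i : Fin p, F i → X)
    (A r : (Fin p → X) → ℕ)
    (hA : ∑ x : Fin p → X, A x = Fintype.card Sstar)
    (hr : ∑ x : Fin p → X, r x = S₁.card)
    (hrA : ∀ x, r x ≤ A x)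
    (hne : {σ : ∀ i, Sstar ≃ F i |
        (∀ x, A x = (Finset.univ.filter fun j : Sstar =>
          (fun i => a i (σ i j)) = x).card) ∧
        (∀ x, r x = (S₁.filter fun j : Sstar =>
          (fun i => a i (σ i j)) = x).card)}.Nonempty) :
    (({σ : ∀ i, Sstar ≃ F i |
        (∀ x, A x = (Finset.univ.filter fun j : Sstar =>
          (fun i => a i (σ i j)) = x).card) ∧
        (∀ x, r x = (S₁.filter fun j : Sstar =>
          (fun i => a i (σ i j)) = x).card)}.ncard : ℝ) =
      (Nat.factorial S₁.card : ℝ) * (Nat.factorial S₁ᶜ.card : ℝ) *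
        (∏ i : Fin p, ∏ y : X,
          (Nat.factorial (∑ x : Fin p → X, if x i = y then A x else 0) : ℝ)) /
        (∏ x : Fin p → X, (Nat.factorial (A x) : ℝ)) *
        ∏ x : Fin p → X, (Nat.choose (A x) (r x) : ℝ)) := by
  classical
  obtain ⟨σ0, h0⟩ := hne
  simp only [Set.mem_setOf_eq] at h0
  obtain ⟨h0A, h0r⟩ := h0
  set SS : Set (∀ i, Sstar ≃ F i) := {σ : ∀ i, Sstar ≃ F i |
      (∀ x, A x = (Finset.univ.filter fun j : Sstar =>
        (fun i => a i (σ i j)) = x).card) ∧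
      (∀ x, r x = (S₁.filter fun j : Sstar =>
        (fun i => a i (σ i j)) = x).card)} with hSS
  have h0mem : σ0 ∈ SS := ⟨h0A, h0r⟩
  -- fiber sizes of the combined coloring
  have fiberCount : ∀ σ : ∀ i, Sstar ≃ F i, σ ∈ SS → ∀ (x : Fin p → X) (b : Bool),
      Nat.card {j : Sstar // Gmap S₁ a σ j = (x, b)} = if b then r x else A x - r x := by
    rintro σ ⟨hσA, hσr⟩ x b
    rw [nat_card_subtype]
    cases b with
    | true =>
      have e1 : Finset.univ.filter (fun j : Sstar => Gmap S₁ a σ j = (x, true)) =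
          S₁.filter (fun j : Sstar => (fun i => a i (σ i j)) = x) := by
        ext j; simp [Gmap, Prod.ext_iff, and_comm]
      rw [e1]
      simp [hσr x]
    | false =>
      have hsplit := Finset.card_filter_add_card_filter_not
        (s := Finset.univ.filter (fun j : Sstar => (fun i => a i (σ i j)) = x))
        (p := fun j : Sstar => j ∈ S₁)
      have e1 : (Finset.univ.filter (fun j : Sstar => (fun i => a i (σ i j)) = x)).filter
          (fun j => j ∈ S₁) = S₁.filter (fun j : Sstar => (fun i => a i (σ i j)) = x) := by
        ext j; simp [and_comm]
      have e2 : (Finset.univ.filter (fun j : Sstar => (fun i => a i (σ i j)) = x)).filter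
          (fun j => ¬ j ∈ S₁) =
          Finset.univ.filter (fun j : Sstar => Gmap S₁ a σ j = (x, false)) := by
        ext j; simp [Gmap, Prod.ext_iff, and_comm]
      rw [e1, e2] at hsplit
      have h1 := hσA x
      have h2 := hσr x
      simp only [if_neg Bool.false_ne_true]
      omega
  -- marginal fiber sizes
  have marg : ∀ (i : Fin p) (y : X),
      Nat.card {z : F i // a i z = y} = ∑ x : Fin p → X, if x i = y then A x else 0 := by
    intro i y
    have e : {z : F i // a i z = y} ≃ {j : Sstar // a i (σ0 i j) = y} :=
      Equiv.subtypeEquiv (σ0 i).symm (fun z => by simp)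
    rw [Nat.card_congr e, nat_card_subtype]
    have hmap : ∀ j ∈ Finset.univ.filter (fun j : Sstar => a i (σ0 i j) = y),
        (fun i' => a i' (σ0 i' j)) ∈ Finset.univ.filter (fun x : Fin p → X => x i = y) := by
      intro j hj
      simp only [Finset.mem_filter, Finset.mem_univ, true_and] at hj ⊢
      exact hj
    rw [Finset.card_eq_sum_card_fiberwise hmap, Finset.sum_filter]
    refine Finset.sum_congr rfl fun x _ => ?_
    by_cases hx : x i = y
    · rw [if_pos hx, if_pos hx, h0A x]
      congr 1
      ext j
      simp only [Finset.mem_filter, Finset.mem_univ, true_and]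
      constructor
      · rintro ⟨-, h⟩; exact h
      · intro h
        refine ⟨?_, h⟩
        have : a i (σ0 i j) = (fun i' => a i' (σ0 i' j)) i := rfl
        rw [this, h]; exact hx
    · rw [if_neg hx, if_neg hx]
  -- stabilizer cardinalities
  have stabCard : ∀ i : Fin p, Nat.card {π : F i ≃ F i // ∀ z, a i (π z) = a i z} =
      ∏ y : X, (∑ x : Fin p → X, if x i = y then A x else 0).factorial := by
    intro i
    rw [nat_card_color (a i) (a i)]
    refine Finset.prod_congr rfl fun y _ => ?_
    rw [nat_card_equiv_of_card_eq rfl, marg i y]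
  -- permutations preserving S₁
  have KCard : Nat.card {τ : Sstar ≃ Sstar // ∀ j, decide (τ j ∈ S₁) = decide (j ∈ S₁)} =
      S₁.card.factorial * S₁ᶜ.card.factorial := by
    rw [nat_card_color (fun j : Sstar => decide (j ∈ S₁)) (fun j : Sstar => decide (j ∈ S₁))]
    rw [Fintype.prod_bool]
    rw [nat_card_equiv_of_card_eq rfl, nat_card_equiv_of_card_eq rfl]
    have c1 : Nat.card {j : Sstar // decide (j ∈ S₁) = true} = S₁.card := by
      rw [nat_card_subtype]; congr 1; ext j; simp
    have c2 : Nat.card {j : Sstar // decide (j ∈ S₁) = false} = S₁ᶜ.card := by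
      rw [nat_card_subtype]; congr 1; ext j; simp
    rw [c1, c2]
  -- fibers of the master map
  have fibC : ∀ σ : ∀ i, Sstar ≃ F i, σ ∈ SS →
      Nat.card {τ : Sstar ≃ Sstar // ∀ j, Gmap S₁ a σ0 (τ j) = Gmap S₁ a σ j} =
        ∏ x : Fin p → X, ((r x).factorial * (A x - r x).factorial) := by
    intro σ hσ
    rw [nat_card_color (Gmap S₁ a σ) (Gmap S₁ a σ0), Fintype.prod_prod_type]
    refine Finset.prod_congr rfl fun x _ => ?_
    rw [Fintype.prod_bool]
    rw [nat_card_equiv_of_card_eq (by rw [fiberCount σ hσ x true, fiberCount σ0 h0mem x true]),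
        nat_card_equiv_of_card_eq (by rw [fiberCount σ hσ x false, fiberCount σ0 h0mem x false]),
        fiberCount σ hσ x true, fiberCount σ hσ x false]
    simp
  -- closure of SS under the master construction
  have hclosed : ∀ (π : ∀ i, {π : F i ≃ F i // ∀ z, a i (π z) = a i z})
      (τ : Sstar ≃ Sstar), (∀ j, decide (τ j ∈ S₁) = decide (j ∈ S₁)) →
      (fun i => τ.trans ((σ0 i).trans (π i).1)) ∈ SS := by
    intro π τ hτ
    have hmem : ∀ j, τ j ∈ S₁ ↔ j ∈ S₁ := fun j => by
      have := hτ j; simpa [decide_eq_decide] using this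
    have hfun : ∀ j, (fun i => a i ((τ.trans ((σ0 i).trans (π i).1)) j)) =
        (fun i => a i (σ0 i (τ j))) := by
      intro j; funext i
      simp only [Equiv.trans_apply]
      exact (π i).2 _
    constructor
    · intro x
      rw [h0A x]
      have := filter_card_comp_equiv (Finset.univ : Finset Sstar)
        (fun j => (fun i => a i (σ0 i j)) = x) τ (fun j => by simp)
      rw [this]
      congr 1
      ext j
      simp only [Finset.mem_filter, Finset.mem_univ, true_and, hfun j]
    · intro x
      rw [h0r x]
      have := filter_card_comp_equiv S₁
        (fun j => (fun i => a i (σ0 i j)) = x) τ hmem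
      rw [this]
      congr 1
      ext j
      simp only [Finset.mem_filter, hfun j]
  -- master counting identity
  letI : Fintype ↥SS := Fintype.ofFinite _
  have hsig : Nat.card (Σ σp : SS,
      {τ : Sstar ≃ Sstar // ∀ j, Gmap S₁ a σ0 (τ j) = Gmap S₁ a σp.1 j}) =
      SS.ncard * ∏ x : Fin p → X, ((r x).factorial * (A x - r x).factorial) := by
    rw [nat_card_sigma']
    rw [Finset.sum_congr rfl (fun σp _ => fibC σp.1 σp.2)]
    rw [Finset.sum_const, smul_eq_mul, Finset.card_univ]
    congr 1
    rw [← Nat.card_coe_set_eq, Nat.card_eq_fintype_card]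
  have hprod : Nat.card ((∀ i, {π : F i ≃ F i // ∀ z, a i (π z) = a i z}) ×
      {τ : Sstar ≃ Sstar // ∀ j, decide (τ j ∈ S₁) = decide (j ∈ S₁)}) =
      (∏ i : Fin p, ∏ y : X, (∑ x : Fin p → X, if x i = y then A x else 0).factorial) *
        (S₁.card.factorial * S₁ᶜ.card.factorial) := by
    rw [Nat.card_prod, Nat.card_pi, KCard]
    congr 1
    exact Finset.prod_congr rfl fun i _ => stabCard i
  have E1 : SS.ncard * ∏ x : Fin p → X, ((r x).factorial * (A x - r x).factorial) =
      (∏ i : Fin p, ∏ y : X, (∑ x : Fin p → X, if x i = y then A x else 0).factorial) *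
        (S₁.card.factorial * S₁ᶜ.card.factorial) := by
    rw [← hsig, ← hprod]
    exact Nat.card_congr (masterEquiv S₁ a σ0 SS hclosed)
  -- pass to the reals
  have E1' : (SS.ncard : ℝ) *
      ∏ x : Fin p → X, (((r x).factorial : ℝ) * ((A x - r x).factorial : ℝ)) =
      (∏ i : Fin p, ∏ y : X, ((∑ x : Fin p → X, if x i = y then A x else 0).factorial : ℝ)) *
        ((S₁.card.factorial : ℝ) * (S₁ᶜ.card.factorial : ℝ)) := by
    exact_mod_cast congrArg (Nat.cast : ℕ → ℝ) E1
  have hAfac : ∀ x : Fin p → X, ((A x).factorial : ℝ) =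
      ((A x).choose (r x) : ℝ) * (((r x).factorial : ℝ) * ((A x - r x).factorial : ℝ)) := by
    intro x
    rw [← Nat.choose_mul_factorial_mul_factorial (hrA x)]
    push_cast
    ring
  have hD0 : (∏ x : Fin p → X, (((r x).factorial : ℝ) * ((A x - r x).factorial : ℝ))) ≠ 0 :=
    Finset.prod_ne_zero_iff.mpr fun x _ => mul_ne_zero
      (Nat.cast_ne_zero.mpr (Nat.factorial_ne_zero _))
      (Nat.cast_ne_zero.mpr (Nat.factorial_ne_zero _))
  have hC0 : (∏ x : Fin p → X, ((A x).choose (r x) : ℝ)) ≠ 0 :=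
    Finset.prod_ne_zero_iff.mpr fun x _ =>
      Nat.cast_ne_zero.mpr (Nat.choose_pos (hrA x)).ne'
  calc (SS.ncard : ℝ)
      = ((∏ i : Fin p, ∏ y : X,
            ((∑ x : Fin p → X, if x i = y then A x else 0).factorial : ℝ)) *
          ((S₁.card.factorial : ℝ) * (S₁ᶜ.card.factorial : ℝ))) /
          ∏ x : Fin p → X, (((r x).factorial : ℝ) * ((A x - r x).factorial : ℝ)) := by
        rw [← E1']
        field_simp
    _ = _ := by
        have hAr : (∏ x : Fin p → X, ((A x).factorial : ℝ)) =
            (∏ x : Fin p → X, ((A x).choose (r x) : ℝ)) *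
              ∏ x : Fin p → X, (((r x).factorial : ℝ) * ((A x - r x).factorial : ℝ)) := by
          rw [← Finset.prod_mul_distrib]
          exact Finset.prod_congr rfl fun x _ => hAfac x
        rw [hAr]
        field_simp
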